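/- Maclaurin's inequality: if λ₁,…,λₙ are positive real numbers and n ≥ k ≥ l ≥ 1, then (σ_k(λ) / C(n,k))^{1/k} ≤ (σ_l(λ) / C(n,l))^{1/l}, where C(n,k) is the binomial coefficient. -/

import Mathlib

open Finset Polynomial

/-- The `k`-th elementary symmetric polynomial of `x : Fin n → ℝ`. -/
noncomputable def esymm {n : ℕ} (k : ℕ) (x : Fin n → ℝ) : ℝ :=
  ∑ s ∈ Finset.univ.powersetCard k, ∏ i ∈ s, x i

/-- `σ_{k;i}`: the `k`-th elementary symmetric polynomial with the `i`-th entry set to `0`. -/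
noncomputable def esymmAt {n : ℕ} (k : ℕ) (i : Fin n) (x : Fin n → ℝ) : ℝ :=
  esymm k (Function.update x i 0)

lemma esymm_eq_multiset {n : ℕ} (k : ℕ) (x : Fin n → ℝ) :
    esymm k x = (Finset.univ.val.map x).esymm k :=
  (Finset.esymm_map_val x Finset.univ k).symm

lemma esymm_pos {n k : ℕ} (hk : k ≤ n) {x : Fin n → ℝ} (hx : ∀ i, 0 < x i) :
    0 < esymm k x := by
  apply Finset.sum_pos
  · exact fun s _ => Finset.prod_pos fun i _ => hx i
  · exact Finset.powersetCard_nonempty.mpr (by simpa using hk)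

lemma exists_step {n : ℕ} (lam : Fin (n + 1) → ℝ) (hpos : ∀ i, 0 < lam i) :
    ∃ mu : Fin n → ℝ, (∀ i, 0 < mu i) ∧
      ∀ j, j ≤ n → ((n : ℝ) + 1) * esymm j mu = ((n : ℝ) + 1 - j) * esymm j lam := by
  classical
  set s : Multiset ℝ := Finset.univ.val.map lam with hs
  have hscard : Multiset.card s = n + 1 := by simp [hs]
  set P : ℝ[X] := (s.map fun a => X - C a).prod with hPdef
  have hProots : P.roots = s := roots_multiset_prod_X_sub_C s
  have hPmonic : P.Monic := monic_multiset_prod_of_monic _ _ fun a _ => monic_X_sub_C a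
  have hPdeg : P.natDegree = n + 1 := by
    rw [hPdef, natDegree_multiset_prod_of_monic]
    · simp [Multiset.map_map, Function.comp, natDegree_X_sub_C, hscard]
      omega
    · intro f hf
      obtain ⟨a, -, rfl⟩ := Multiset.mem_map.1 hf
      exact monic_X_sub_C a
  set Q : ℝ[X] := derivative P with hQdef
  have hQtop : Q.coeff n = (n : ℝ) + 1 := by
    rw [hQdef, coeff_derivative]
    have h1 : P.coeff (n + 1) = 1 := by
      have := hPmonic.leadingCoeff
      rwa [leadingCoeff, hPdeg] at this
    rw [h1]; ring
  have hQne : Q ≠ 0 := fun h => by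
    rw [h, coeff_zero] at hQtop; nlinarith [hQtop]
  have hQdeg : Q.natDegree = n := by
    refine le_antisymm ?_ (le_natDegree_of_ne_zero (by rw [hQtop]; positivity))
    have h2 := natDegree_derivative_le P
    rw [← hQdef, hPdeg] at h2; omega
  have hcard : Multiset.card Q.roots = n := by
    have h1 : Multiset.card Q.roots ≤ n := hQdeg ▸ Q.card_roots'
    have h2 : Multiset.card P.roots ≤ Multiset.card Q.roots + 1 := P.card_roots_le_derivative
    rw [hProots, hscard] at h2
    omega
  -- expression for Q as a sum of products
  have hQeq : Q = ∑ i : Fin (n + 1), ∏ j ∈ Finset.univ.erase i, (X - C (lam j)) := by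
    rw [hQdef, hPdef, hs, Multiset.map_map, derivative_prod, Finset.sum_eq_multiset_sum]
    refine congrArg Multiset.sum (Multiset.map_congr rfl fun i _ => ?_)
    simp only [Function.comp_apply, derivative_sub, derivative_X, derivative_C, sub_zero,
      mul_one]
    rfl
  -- all roots of Q are positive
  have hrootspos : ∀ z ∈ Q.roots, 0 < z := by
    intro z hz
    by_contra hle
    push_neg at hle
    have hev : Q.eval z = 0 := (mem_roots hQne).1 hz
    have key : 0 < (-1 : ℝ) ^ n * Q.eval z := by
      rw [hQeq, eval_finset_sum, Finset.mul_sum]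
      apply Finset.sum_pos ?_ Finset.univ_nonempty
      intro i _
      have hc : (Finset.univ.erase i).card = n := by
        rw [Finset.card_erase_of_mem (Finset.mem_univ i), Finset.card_univ]
        simp
      rw [eval_prod]
      simp only [eval_sub, eval_X, eval_C]
      have heq : ∏ j ∈ Finset.univ.erase i, (z - lam j)
          = (-1 : ℝ) ^ n * ∏ j ∈ Finset.univ.erase i, (lam j - z) := by
        calc ∏ j ∈ Finset.univ.erase i, (z - lam j)
            = ∏ j ∈ Finset.univ.erase i, (-1 : ℝ) * (lam j - z) :=
              Finset.prod_congr rfl fun j _ => by ring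
          _ = (-1 : ℝ) ^ (Finset.univ.erase i).card
                * ∏ j ∈ Finset.univ.erase i, (lam j - z) := by
              rw [Finset.prod_mul_distrib, Finset.prod_const]
          _ = (-1 : ℝ) ^ n * ∏ j ∈ Finset.univ.erase i, (lam j - z) := by rw [hc]
      rw [heq, ← mul_assoc, ← pow_add]
      have hev2 : (-1 : ℝ) ^ (n + n) = 1 := Even.neg_one_pow ⟨n, rfl⟩
      rw [hev2, one_mul]
      exact Finset.prod_pos fun j _ => by linarith [hpos j]
    rw [hev] at key
    simp at key
  -- extract the root function
  set L : List ℝ := Q.roots.toList with hLdef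
  have hLlen : L.length = n := by rw [hLdef, Multiset.length_toList, hcard]
  set mu : Fin n → ℝ := fun i => L.get (Fin.cast hLlen.symm i) with hmu
  have hofn : List.ofFn mu = L := by
    apply List.ext_getElem
    · simp [hLlen]
    · intro i h1 h2
      simp [hmu, List.getElem_ofFn]
  have hmap : Finset.univ.val.map mu = Q.roots := by
    rw [Fin.univ_val_map, hofn, hLdef, Multiset.coe_toList]
  refine ⟨mu, ?_, ?_⟩
  · intro i
    apply hrootspos
    rw [← hmap]
    exact Multiset.mem_map_of_mem mu (Finset.mem_univ_val i)
  · intro j hj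
    have hmu_esymm : esymm j mu = Q.roots.esymm j := by
      rw [esymm_eq_multiset, hmap]
    have hQcoeff : Q.coeff (n - j) = ((n : ℝ) + 1) * ((-1) ^ j * Q.roots.esymm j) := by
      have h1 := Polynomial.coeff_eq_esymm_roots_of_card (p := Q)
        (by rw [hcard, hQdeg]) (k := n - j) (by rw [hQdeg]; omega)
      rw [hQdeg, show n - (n - j) = j by omega] at h1
      rw [h1, leadingCoeff, hQdeg, hQtop]
      ring
    have hPcoeff : P.coeff (n - j + 1) = (-1) ^ j * s.esymm j := by
      have h1 := Multiset.prod_X_sub_C_coeff s (k := n - j + 1) (by rw [hscard]; omega)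
      rw [hscard, show n + 1 - (n - j + 1) = j by omega] at h1
      rw [hPdef]
      exact h1
    have hQc2 : Q.coeff (n - j) = P.coeff (n - j + 1) * ((n : ℝ) - j + 1) := by
      rw [hQdef, coeff_derivative]
      rw [Nat.cast_sub hj]
    have hcomb : ((n : ℝ) + 1) * ((-1) ^ j * Q.roots.esymm j)
        = ((-1) ^ j * s.esymm j) * ((n : ℝ) - j + 1) := by
      rw [← hQcoeff, hQc2, hPcoeff]
    have hne : ((-1 : ℝ)) ^ j ≠ 0 := pow_ne_zero _ (by norm_num)
    have hlam : esymm j lam = s.esymm j := by rw [esymm_eq_multiset, hs]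
    rw [hmu_esymm, hlam]
    apply mul_left_cancel₀ hne
    linear_combination hcomb

lemma esymm_top {n : ℕ} (x : Fin n → ℝ) : esymm n x = ∏ i, x i := by
  unfold esymm
  have h : Finset.univ.powersetCard n = {(Finset.univ : Finset (Fin n))} := by
    ext t
    simp only [Finset.mem_powersetCard, Finset.mem_singleton]
    constructor
    · rintro ⟨-, hc⟩
      exact Finset.eq_univ_of_card t (by rw [hc, Fintype.card_fin])
    · rintro rfl
      exact ⟨subset_rfl, by simp⟩
  rw [h, Finset.sum_singleton]

lemma esymm_pred {n : ℕ} (hn : 1 ≤ n) (x : Fin n → ℝ) :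
    esymm (n - 1) x = ∑ i, ∏ j ∈ Finset.univ.erase i, x j := by
  classical
  unfold esymm
  refine (Finset.sum_bij (fun i _ => Finset.univ.erase i) ?_ ?_ ?_ ?_).symm
  · intro i _
    rw [Finset.mem_powersetCard]
    exact ⟨Finset.subset_univ _, by
      rw [Finset.card_erase_of_mem (Finset.mem_univ i), Finset.card_univ, Fintype.card_fin]⟩
  · intro a _ b _ hab
    by_contra hne
    have : a ∈ Finset.univ.erase b := Finset.mem_erase.2 ⟨hne, Finset.mem_univ a⟩
    rw [← hab] at this
    exact (Finset.mem_erase.1 this).1 rfl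
  · intro t ht
    rw [Finset.mem_powersetCard] at ht
    have hcompl : (Finset.univ \ t).card = 1 := by
      rw [Finset.card_sdiff_of_subset (Finset.subset_univ t), Finset.card_univ, Fintype.card_fin, ht.2]
      omega
    obtain ⟨i, hi⟩ := Finset.card_eq_one.1 hcompl
    refine ⟨i, Finset.mem_univ i, ?_⟩
    have h4 : Finset.univ \ (Finset.univ \ t) = t :=
      Finset.sdiff_sdiff_eq_self (Finset.subset_univ t)
    rw [← h4, hi, Finset.sdiff_singleton_eq_erase]
  · intro i _
    rfl

/-- Base case `k = n` of the consecutive Maclaurin inequality, via AM-GM. -/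
lemma maclaurin_base {n : ℕ} (hn : 1 ≤ n) (lam : Fin n → ℝ) (hpos : ∀ i, 0 < lam i) :
    esymm n lam ^ (n - 1) ≤ (esymm (n - 1) lam / n) ^ n := by
  classical
  set a : Fin n → ℝ := fun i => ∏ j ∈ Finset.univ.erase i, lam j with ha
  have hapos : ∀ i, 0 < a i := fun i => Finset.prod_pos fun j _ => hpos j
  have hPpos : 0 < ∏ i, lam i := Finset.prod_pos fun i _ => hpos i
  have hsum : ∑ i, a i = esymm (n - 1) lam := (esymm_pred hn lam).symm
  have hprod : ∏ i, a i = (∏ i, lam i) ^ (n - 1) := by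
    have h1 : ∀ i, a i = (∏ j, lam j) / lam i := by
      intro i
      rw [ha, eq_div_iff (hpos i).ne', mul_comm]
      exact Finset.mul_prod_erase Finset.univ lam (Finset.mem_univ i)
    calc ∏ i, a i = ∏ i, (∏ j, lam j) / lam i := Finset.prod_congr rfl fun i _ => h1 i
      _ = (∏ j, lam j) ^ n / ∏ i, lam i := by
          rw [Finset.prod_div_distrib, Finset.prod_const, Finset.card_univ, Fintype.card_fin]
      _ = (∏ i, lam i) ^ (n - 1) := by
          rw [div_eq_iff hPpos.ne', ← pow_succ]
          congr 1
          omega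
  -- AM-GM
  have hamgm := Real.geom_mean_le_arith_mean_weighted Finset.univ (fun _ => 1 / n) a
    (fun i _ => by positivity)
    (by rw [Finset.sum_const, Finset.card_univ, Fintype.card_fin, nsmul_eq_mul]; field_simp)
    (fun i _ => (hapos i).le)
  rw [Real.finset_prod_rpow _ _ (fun i _ => (hapos i).le)] at hamgm
  have hsum2 : ∑ i, (1 / (n : ℝ)) * a i = esymm (n - 1) lam / n := by
    rw [← Finset.mul_sum, hsum]; ring
  rw [hsum2, hprod] at hamgm
  -- raise to the n-th power
  have h2 : (((∏ i, lam i) ^ (n - 1) : ℝ) ^ ((1 : ℝ) / n)) ^ (n : ℕ)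
      ≤ (esymm (n - 1) lam / n) ^ (n : ℕ) := by
    apply pow_le_pow_left₀ (by positivity) hamgm
  rw [← Real.rpow_natCast (((∏ i, lam i) ^ (n - 1) : ℝ) ^ ((1 : ℝ) / n)) n,
    ← Real.rpow_mul (by positivity)] at h2
  have h3 : (1 : ℝ) / n * n = 1 := by
    field_simp
  rw [h3, Real.rpow_one] at h2
  rw [esymm_top]
  exact h2

/-- Consecutive Maclaurin inequality in power form. -/
lemma maclaurin_consec : ∀ n k : ℕ, 2 ≤ k → k ≤ n → ∀ lam : Fin n → ℝ, (∀ i, 0 < lam i) →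
    (esymm k lam / (n.choose k : ℝ)) ^ (k - 1)
      ≤ (esymm (k - 1) lam / (n.choose (k - 1) : ℝ)) ^ k := by
  intro n
  induction n with
  | zero => intro k hk2 hkn; omega
  | succ n IH =>
    intro k hk2 hkn lam hpos
    rcases eq_or_lt_of_le hkn with heq | hlt
    · -- k = n + 1 : base case
      subst heq
      have hbase := maclaurin_base (by omega) lam hpos
      simpa [Nat.choose_succ_self_right] using hbase
    · -- k ≤ n : use the derivative step
      have hkn' : k ≤ n := by omega
      obtain ⟨mu, hmupos, hmu⟩ := exists_step lam hpos
      have hdiv : ∀ j, j ≤ n → esymm j lam / ((n + 1).choose j : ℝ)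
          = esymm j mu / (n.choose j : ℝ) := by
        intro j hj
        have hnat : (n + 1) * n.choose j = (n + 1).choose j * (n + 1 - j) :=
          (Nat.add_one_mul_choose_eq n j).trans (Nat.choose_succ_right_eq (n + 1) j)
        have hcast := congrArg (Nat.cast : ℕ → ℝ) hnat
        push_cast [Nat.cast_sub (by omega : j ≤ n + 1)] at hcast
        have hEj := hmu j hj
        have hC1 : (0 : ℝ) < ((n + 1).choose j : ℝ) := by
          exact_mod_cast Nat.choose_pos (by omega)
        have hC2 : (0 : ℝ) < (n.choose j : ℝ) := by
          exact_mod_cast Nat.choose_pos hj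
        rw [div_eq_div_iff hC1.ne' hC2.ne']
        have hn1 : (0 : ℝ) < (n : ℝ) + 1 - j := by
          have : (j : ℝ) ≤ n := by exact_mod_cast hj
          linarith
        have hn2 : (0 : ℝ) < (n : ℝ) + 1 := by positivity
        -- (n+1) * E_mu = (n+1-j) * E_lam ; (n+1) * C_n = (n+1-j) * C_{n+1}
        -- want E_lam * C_n = E_mu * C_{n+1}
        apply mul_left_cancel₀ (mul_pos hn2 hn1).ne'
        linear_combination ((n : ℝ) + 1 - j) * esymm j lam * hcast
          - ((n : ℝ) + 1 - j) * (((n + 1).choose j : ℝ)) * hEj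
      rw [hdiv k (by omega), hdiv (k - 1) (by omega)]
      exact IH k hk2 hkn' mu hmupos

lemma rpow_step {a b : ℝ} (ha : 0 < a) (hb : 0 < b) {k : ℕ} (hk : 1 ≤ k)
    (h : a ^ k ≤ b ^ (k + 1)) : a ^ ((1 : ℝ) / (k + 1)) ≤ b ^ ((1 : ℝ) / k) := by
  have hkR : (0 : ℝ) < k := by exact_mod_cast hk
  have h1 : ((a ^ k : ℝ)) ^ ((1 : ℝ) / (k * (k + 1)))
      ≤ ((b ^ (k + 1) : ℝ)) ^ ((1 : ℝ) / (k * (k + 1))) :=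
    Real.rpow_le_rpow (by positivity) h (by positivity)
  rw [← Real.rpow_natCast a k, ← Real.rpow_natCast b (k + 1),
    ← Real.rpow_mul ha.le, ← Real.rpow_mul hb.le] at h1
  have e1 : (k : ℝ) * ((1 : ℝ) / ((k : ℝ) * ((k : ℝ) + 1))) = 1 / ((k : ℝ) + 1) := by
    field_simp
  have e2 : ((k + 1 : ℕ) : ℝ) * ((1 : ℝ) / ((k : ℝ) * ((k : ℝ) + 1))) = 1 / (k : ℝ) := by
    push_cast
    field_simp
  rwa [e1, e2] at h1

/-- Maclaurin's inequality: for positive `λ₁,…,λₙ` and `n ≥ k ≥ l ≥ 1`,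
`(σ_k(λ)/C(n,k))^{1/k} ≤ (σ_l(λ)/C(n,l))^{1/l}`. -/
theorem maclaurin_inequality {n : ℕ} (k l : ℕ) (hl : 1 ≤ l) (hkl : l ≤ k) (hkn : k ≤ n)
    (lam : Fin n → ℝ) (hpos : ∀ i, 0 < lam i) :
    (esymm k lam / (n.choose k : ℝ)) ^ ((1 : ℝ) / k)
      ≤ (esymm l lam / (n.choose l : ℝ)) ^ ((1 : ℝ) / l) := by
  revert hkn
  induction k, hkl using Nat.le_induction with
  | base => intro _; exact le_rfl
  | succ k hlk ih =>
    intro hkn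
    have hkn' : k ≤ n := by omega
    have hpk : ∀ j, j ≤ n → 0 < esymm j lam / (n.choose j : ℝ) := fun j hj =>
      div_pos (esymm_pos hj hpos) (by exact_mod_cast Nat.choose_pos hj)
    have hcons := maclaurin_consec n (k + 1) (by omega) hkn lam hpos
    simp only [Nat.add_sub_cancel] at hcons
    have hstep := rpow_step (hpk (k + 1) hkn) (hpk k hkn') (by omega) hcons
    refine le_trans ?_ (ih hkn')
    push_cast
    exact hstep
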